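/- Every Sturmian word is recurrent: if w has complexity p_w(n) = n+1 for all n, then every factor of w occurs infinitely many times in w. -/

import Mathlib

def factorAt {A : Type*} (w : ℕ → A) (i n : ℕ) : List A :=
  (List.range n).map fun k => w (i + k)

def factors {A : Type*} (w : ℕ → A) (n : ℕ) : Set (List A) :=
  {u | ∃ i, u = factorAt w i n}

noncomputable def complexity {A : Type*} (w : ℕ → A) (n : ℕ) : ℕ :=
  (factors w n).ncard

section Aux
variable {A : Type*}

lemma factorAt_eq_ofFn (w : ℕ → A) (i n : ℕ) :
    factorAt w i n = List.ofFn (fun k : Fin n => w (i + k)) := by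
  apply List.ext_getElem <;> simp [factorAt]

lemma factorAt_take (w : ℕ → A) (i m : ℕ) :
    (factorAt w i (m + 1)).take m = factorAt w i m := by
  unfold factorAt
  rw [← List.map_take, List.take_range, Nat.min_eq_left (Nat.le_succ m)]

lemma factors_finite [Finite A] (w : ℕ → A) (n : ℕ) : (factors w n).Finite := by
  apply Set.Finite.subset (Set.finite_range (List.ofFn : (Fin n → A) → List A))
  rintro _ ⟨i, rfl⟩
  exact ⟨_, (factorAt_eq_ofFn w i n).symm⟩

lemma take_image (w : ℕ → A) (m : ℕ) :
    (fun l : List A => l.take m) '' factors w (m + 1) = factors w m := by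
  ext u
  constructor
  · rintro ⟨_, ⟨i, rfl⟩, rfl⟩
    exact ⟨i, factorAt_take w i m⟩
  · rintro ⟨i, rfl⟩
    exact ⟨factorAt w i (m + 1), ⟨i, rfl⟩, factorAt_take w i m⟩

lemma complexity_mono [Finite A] (w : ℕ → A) (m : ℕ) :
    complexity w m ≤ complexity w (m + 1) := by
  rw [complexity, complexity, ← take_image w m]
  exact Set.ncard_image_le (factors_finite w (m + 1))

lemma complexity_zero (w : ℕ → A) : complexity w 0 = 1 := by
  have : factors w 0 = {([] : List A)} := by
    ext u
    simp [factors, factorAt]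
  rw [complexity, this, Set.ncard_singleton]

lemma ext_step [Finite A] (w : ℕ → A) (m : ℕ) (hm : complexity w (m + 1) ≤ complexity w m) :
    ∀ i j, factorAt w i m = factorAt w j m → w (i + m) = w (j + m) := by
  have hm' : ((fun l : List A => l.take m) '' factors w (m + 1)).ncard
      = (factors w (m + 1)).ncard := by
    rw [take_image]
    exact (le_antisymm hm (complexity_mono w m)).symm
  have hinj := Set.injOn_of_ncard_image_eq hm' (factors_finite w (m + 1))
  intro i j hij
  have h1 : (factorAt w i (m + 1)).take m = (factorAt w j (m + 1)).take m := by
    rw [factorAt_take, factorAt_take]; exact hij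
  have h2 : factorAt w i (m + 1) = factorAt w j (m + 1) := hinj ⟨i, rfl⟩ ⟨j, rfl⟩ h1
  rw [factorAt_eq_ofFn, factorAt_eq_ofFn] at h2
  simpa using congrFun (List.ofFn_inj.mp h2) ⟨m, Nat.lt_succ_self m⟩

lemma propagate (w : ℕ → A) (m : ℕ)
    (hstep : ∀ i j, factorAt w i m = factorAt w j m → w (i + m) = w (j + m))
    {a b : ℕ} (hab : factorAt w a m = factorAt w b m) :
    ∀ t, factorAt w (a + t) m = factorAt w (b + t) m := by
  intro t
  induction t with
  | zero => simpa using hab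
  | succ t ih =>
    have key : ∀ s, s ≤ m → w (a + t + s) = w (b + t + s) := by
      intro s hs
      rcases eq_or_lt_of_le hs with rfl | hlt
      · exact hstep _ _ ih
      · have ih' := ih
        rw [factorAt_eq_ofFn, factorAt_eq_ofFn] at ih'
        simpa using congrFun (List.ofFn_inj.mp ih') ⟨s, hlt⟩
    rw [factorAt_eq_ofFn, factorAt_eq_ofFn]
    refine congrArg List.ofFn (funext fun k => ?_)
    have e1 : a + (t + 1) + (k : ℕ) = a + t + ((k : ℕ) + 1) := by omega
    have e2 : b + (t + 1) + (k : ℕ) = b + t + ((k : ℕ) + 1) := by omega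
    rw [e1, e2]
    exact key _ (by have := k.isLt; omega)

lemma eventually_periodic_of_plateau [Finite A] (w : ℕ → A) (m : ℕ)
    (hm : complexity w (m + 1) ≤ complexity w m) :
    ∃ M p, 0 < p ∧ ∀ s, M ≤ s → w (s + p) = w s := by
  have hstep := ext_step w m hm
  haveI : Finite ↥(factors w m) := (factors_finite w m).to_subtype
  obtain ⟨i, j, hne, heq⟩ := Finite.exists_ne_map_eq_of_infinite
    (fun i : ℕ => (⟨factorAt w i m, ⟨i, rfl⟩⟩ : ↥(factors w m)))
  have heq' : factorAt w i m = factorAt w j m := congrArg Subtype.val heq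
  obtain ⟨a, b, hab, hfab⟩ : ∃ a b, a < b ∧ factorAt w a m = factorAt w b m := by
    rcases Ne.lt_or_gt hne with h' | h'
    exacts [⟨i, j, h', heq'⟩, ⟨j, i, h', heq'.symm⟩]
  refine ⟨a + m, b - a, by omega, fun s hs => ?_⟩
  have hper := hstep _ _ (propagate w m hstep hfab (s - (a + m)))
  have e1 : a + (s - (a + m)) + m = s := by omega
  have e2 : b + (s - (a + m)) + m = s + (b - a) := by omega
  rw [e1, e2] at hper
  exact hper.symm

lemma complexity_bounded [Finite A] (w : ℕ → A) {M p : ℕ} (hp : 0 < p)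
    (hper : ∀ s, M ≤ s → w (s + p) = w s) (n : ℕ) : complexity w n ≤ M + p := by
  have claim : ∀ i, ∃ i' < M + p, factorAt w i' n = factorAt w i n := by
    intro i
    induction i using Nat.strong_induction_on with
    | _ i ih =>
      rcases lt_or_ge i (M + p) with hlt | hge
      · exact ⟨i, hlt, rfl⟩
      · obtain ⟨i', hi', he⟩ := ih (i - p) (by omega)
        refine ⟨i', hi', he.trans ?_⟩
        apply List.ext_getElem (by simp [factorAt])
        intro k h1 h2
        simp only [factorAt, List.getElem_map, List.getElem_range]
        have := hper (i - p + k) (by omega)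
        rw [show i - p + k + p = i + k by omega] at this
        exact this.symm
  have hsub : factors w n ⊆ (fun i => factorAt w i n) '' Set.Iio (M + p) := by
    rintro _ ⟨i, rfl⟩
    obtain ⟨i', hi', he⟩ := claim i
    exact ⟨i', hi', he⟩
  calc complexity w n ≤ ((fun i => factorAt w i n) '' Set.Iio (M + p)).ncard :=
        Set.ncard_le_ncard hsub ((Set.finite_Iio _).image _)
    _ ≤ (Set.Iio (M + p)).ncard := Set.ncard_image_le (Set.finite_Iio _)
    _ = M + p := by rw [← Finset.coe_Iio, Set.ncard_coe_finset, Nat.card_Iio]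

end Aux

theorem stmt4 {A : Type*} [Fintype A] (w : ℕ → A)
    (h : ∀ n, complexity w n = n + 1) :
    ∀ n, ∀ u ∈ factors w n, {i : ℕ | factorAt w i n = u}.Infinite := by
  intro n u hu
  by_contra hinf
  rw [Set.not_infinite] at hinf
  obtain ⟨N, hN⟩ : ∃ N, ∀ i, N ≤ i → factorAt w i n ≠ u := by
    obtain ⟨b, hb⟩ := hinf.bddAbove
    exact ⟨b + 1, fun i hi hiu => by have := hb hiu; omega⟩
  set w' : ℕ → A := fun i => w (N + i) with hw'
  have hfac' : ∀ i m, factorAt w' i m = factorAt w (N + i) m := by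
    intro i m
    unfold factorAt
    simp [hw', Nat.add_assoc]
  have hsub : factors w' n ⊆ factors w n \ {u} := by
    rintro _ ⟨i, rfl⟩
    refine ⟨⟨N + i, hfac' i n⟩, ?_⟩
    simp only [Set.mem_singleton_iff]
    rw [hfac']
    exact hN (N + i) (by omega)
  have hcle : complexity w' n ≤ n := by
    calc complexity w' n ≤ (factors w n \ {u}).ncard :=
          Set.ncard_le_ncard hsub ((factors_finite w n).diff)
      _ = n := by
          rw [Set.ncard_diff_singleton_of_mem hu]
          rw [show (factors w n).ncard = complexity w n from rfl, h n]; omega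
  obtain ⟨m, hm⟩ : ∃ m, complexity w' (m + 1) ≤ complexity w' m := by
    by_contra hcon
    push_neg at hcon
    have grow : ∀ k, k + 1 ≤ complexity w' k := by
      intro k
      induction k with
      | zero => simp [complexity_zero]
      | succ k ih => have := hcon k; omega
    have := grow n
    omega
  obtain ⟨M, p, hp, hper'⟩ := eventually_periodic_of_plateau w' m hm
  have hper : ∀ s, N + M ≤ s → w (s + p) = w s := by
    intro s hs
    have h1 : w' (s - N + p) = w' (s - N) := hper' (s - N) (by omega)
    simp only [hw'] at h1
    rw [show N + (s - N + p) = s + p by omega, show N + (s - N) = s by omega] at h1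
    exact h1
  have hb := complexity_bounded w hp hper (N + M + p)
  rw [h (N + M + p)] at hb
  omega
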